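/- Let M' be a C^∞(V)-submodule of C^∞(V)^r and let G be a finite group acting on V by diffeomorphisms, acting diagonally on C^∞(V)^r. If M' is generated by finitely many G-invariant elements f_1,...,f_k, then the C^∞(V)^G-submodule M of (C^∞(V)^G)^r generated by f_1,...,f_k satisfies M = M' ∩ (C^∞(V)^G)^r. -/

import Mathlib

open scoped Manifold

/-- Let `M'` be a `C^∞(V)`-submodule of `C^∞(V)^r` generated by finitely many
`G`-invariant elements `f_1, ..., f_k` (smooth functions `V → ℂ^r`). Then the
`C^∞(V)^G`-submodule `M` of `(C^∞(V)^G)^r` generated by `f_1, ..., f_k` satisfies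
`M = M' ∩ (C^∞(V)^G)^r`. -/
theorem invariant_generators_intersection
    {E : Type*} [NormedAddCommGroup E] [NormedSpace ℝ E]
    {H : Type*} [TopologicalSpace H] (I : ModelWithCorners ℝ E H)
    {V : Type*} [TopologicalSpace V] [ChartedSpace H V] [IsManifold I ((⊤ : ℕ∞) : WithTop ℕ∞) V]
    {G : Type*} [Group G] [Fintype G] [MulAction G V]
    (hact : ∀ g : G, ContMDiff I I (⊤ : ℕ∞) (fun v : V => g • v))
    (r k : ℕ) (f : Fin k → V → (Fin r → ℂ))
    (hsmooth : ∀ (i : Fin k) (j : Fin r), ContMDiff I 𝓘(ℝ, ℂ) (⊤ : ℕ∞) (fun v => f i v j))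
    (hinv : ∀ (i : Fin k) (g : G) (v : V), f i (g • v) = f i v)
    (M' : Set (V → Fin r → ℂ))
    (hM' : M' = {m | ∃ c : Fin k → V → ℂ,
      (∀ i, ContMDiff I 𝓘(ℝ, ℂ) (⊤ : ℕ∞) (c i)) ∧
      m = fun v j => ∑ i, c i v * f i v j})
    (M : Set (V → Fin r → ℂ))
    (hM : M = {m | ∃ c : Fin k → V → ℂ,
      (∀ i, ContMDiff I 𝓘(ℝ, ℂ) (⊤ : ℕ∞) (c i) ∧ ∀ (g : G) (v : V), c i (g • v) = c i v) ∧
      m = fun v j => ∑ i, c i v * f i v j}) :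
    M = M' ∩ {m | ∀ (g : G) (v : V), m (g • v) = m v} := by
  subst hM hM'
  ext m
  constructor
  · rintro ⟨c, hc, rfl⟩
    refine ⟨⟨c, fun i => (hc i).1, rfl⟩, fun g v => ?_⟩
    funext j
    simp only [(hc _).2 g v, hinv _ g v]
  · rintro ⟨⟨c, hc, rfl⟩, hm⟩
    refine ⟨fun i v => (Fintype.card G : ℂ)⁻¹ * ∑ g : G, c i (g • v), fun i => ⟨?_, ?_⟩, ?_⟩
    · have hmul : ContMDiff 𝓘(ℝ, ℂ) 𝓘(ℝ, ℂ) (⊤ : ℕ∞) (fun x : ℂ => (Fintype.card G : ℂ)⁻¹ * x) :=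
        (ContinuousLinearMap.mul ℝ ℂ ((Fintype.card G : ℂ)⁻¹)).contDiff.contMDiff
      exact hmul.comp (contMDiff_finset_sum fun g _ => (hc i).comp (hact g))
    · intro g v
      have : (∑ h : G, c i (h • g • v)) = ∑ h : G, c i (h • v) :=
        Fintype.sum_equiv (Equiv.mulRight g) _ _ fun h => by
          simp [Equiv.coe_mulRight, mul_smul]
      show (Fintype.card G : ℂ)⁻¹ * ∑ h : G, c i (h • g • v)
          = (Fintype.card G : ℂ)⁻¹ * ∑ h : G, c i (h • v)
      rw [this]
    · funext v j
      symm
      have key : ∀ g : G, (∑ i, c i (g • v) * f i v j) = ∑ i, c i v * f i v j := by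
        intro g
        have h1 := congrFun (hm g v) j
        simp only at h1
        calc (∑ i, c i (g • v) * f i v j) = ∑ i, c i (g • v) * f i (g • v) j := by
              simp [hinv _ g v]
          _ = ∑ i, c i v * f i v j := h1
      have hcard : (Fintype.card G : ℂ) ≠ 0 := by
        exact_mod_cast Fintype.card_ne_zero
      simp only
      calc ∑ i, ((Fintype.card G : ℂ)⁻¹ * ∑ g : G, c i (g • v)) * f i v j
          = (Fintype.card G : ℂ)⁻¹ * ∑ i, ∑ g : G, c i (g • v) * f i v j := by
            rw [Finset.mul_sum]
            exact Finset.sum_congr rfl fun i _ => by rw [mul_assoc, Finset.sum_mul]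
        _ = (Fintype.card G : ℂ)⁻¹ * ∑ g : G, ∑ i, c i (g • v) * f i v j := by
            rw [Finset.sum_comm]
        _ = (Fintype.card G : ℂ)⁻¹ * ∑ g : G, ∑ i, c i v * f i v j := by
            rw [Finset.sum_congr rfl fun g _ => key g]
        _ = ∑ i, c i v * f i v j := by
            rw [Finset.sum_const, Finset.card_univ, nsmul_eq_mul, ← mul_assoc,
              inv_mul_cancel₀ hcard, one_mul]
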